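/- Let X and Y be Banach spaces. Then NA_π(X⊗̂_πY) is norm-dense in X⊗̂_πY if and only if INA_π(X⊗̂_πY) is norm-dense in X⊗̂_πY. -/

import Mathlib

open MeasureTheory Metric Set Filter TopologicalSpace

noncomputable section

variable {𝕜 : Type*} [RCLike 𝕜]
variable {X : Type*} [NormedAddCommGroup X] [NormedSpace 𝕜 X]
variable {Y : Type*} [NormedAddCommGroup Y] [NormedSpace 𝕜 Y]
variable {T : Type*} [NormedAddCommGroup T] [NormedSpace 𝕜 T]
variable [NormedSpace ℝ T] [IsScalarTower ℝ 𝕜 T]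

/-- `T`, together with the continuous bilinear map `tmul`, is a realization of the
projective tensor product `X ⊗̂_π Y`: it is complete, the span of elementary tensors
`x ⊗ y = tmul x y` is dense, and on that span the norm is the projective norm. -/
structure IsProjTensor (tmul : X →L[𝕜] Y →L[𝕜] T) : Prop where
  complete : CompleteSpace T
  dense_span :
    Dense ((Submodule.span 𝕜 (Set.range fun p : X × Y => tmul p.1 p.2) : Submodule 𝕜 T) : Set T)
  norm_eq : ∀ z : T,
    z ∈ Submodule.span 𝕜 (Set.range fun p : X × Y => tmul p.1 p.2) →
    ‖z‖ = sInf { c : ℝ | ∃ (m : ℕ) (x : Fin m → X) (y : Fin m → Y),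
      z = ∑ i, tmul (x i) (y i) ∧ c = ∑ i, ‖x i‖ * ‖y i‖ }

/-- `u` attains its projective norm (`u ∈ NA_π(X ⊗̂_π Y)`): it admits a representation
`u = ∑ λ_n x_n ⊗ y_n` with `x_n ∈ B_X`, `y_n ∈ B_Y`, `λ_n ≥ 0` and `∑ λ_n = ‖u‖_π`. -/
def NApi (tmul : X →L[𝕜] Y →L[𝕜] T) (u : T) : Prop :=
  ∃ (x : ℕ → X) (y : ℕ → Y) (l : ℕ → ℝ),
    (∀ n, ‖x n‖ ≤ 1) ∧ (∀ n, ‖y n‖ ≤ 1) ∧ (∀ n, 0 ≤ l n) ∧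
    HasSum (fun n => (l n : 𝕜) • tmul (x n) (y n)) u ∧ HasSum l ‖u‖

/-- `u` is finitely norm-attaining (`u ∈ FNA_π(X ⊗̂_π Y)`): it admits a finite optimal
representation `u = ∑_{k<m} x_k ⊗ y_k` with `∑_{k<m} ‖x_k‖‖y_k‖ = ‖u‖_π`. -/
def FNApi (tmul : X →L[𝕜] Y →L[𝕜] T) (u : T) : Prop :=
  ∃ (m : ℕ) (x : Fin m → X) (y : Fin m → Y),
    u = ∑ i, tmul (x i) (y i) ∧ ∑ i, ‖x i‖ * ‖y i‖ = ‖u‖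

/-- `u` is an integral projective norm-attaining tensor witnessed by `μ`: `μ` is a finite
positive Borel measure concentrated on `B_X × B_Y`, the map `(x, y) ↦ x ⊗ y` is
`μ`-Bochner integrable, `u = ∫ x ⊗ y ∂μ` and `‖μ‖ = ‖u‖_π`. -/
def INApiWitness [MeasurableSpace X] [MeasurableSpace Y]
    (tmul : X →L[𝕜] Y →L[𝕜] T) (u : T) (μ : Measure (X × Y)) : Prop :=
  IsFiniteMeasure μ ∧
  μ ((closedBall (0 : X) 1 ×ˢ closedBall (0 : Y) 1)ᶜ) = 0 ∧
  Integrable (fun p : X × Y => tmul p.1 p.2) μ ∧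
  u = ∫ p, tmul p.1 p.2 ∂μ ∧
  (μ Set.univ).toReal = ‖u‖

/-- `u ∈ INA_π(X ⊗̂_π Y)`: `u` is an integral projective norm-attaining tensor. -/
def INApi [MeasurableSpace X] [MeasurableSpace Y]
    (tmul : X →L[𝕜] Y →L[𝕜] T) (u : T) : Prop :=
  ∃ μ : Measure (X × Y), INApiWitness tmul u μ

/-! ### Auxiliary lemmas -/

section MyAux

/-- real smul vs `𝕜`-coerced smul. -/
lemma my_coe_smul (r : ℝ) (t : T) : (r : 𝕜) • t = r • t := by
  rw [← smul_one_smul 𝕜 r t, RCLike.real_smul_eq_coe_mul, mul_one]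

lemma my_norm_tmul_le (tmul : X →L[𝕜] Y →L[𝕜] T) (hT : IsProjTensor tmul) (x : X) (y : Y) :
    ‖tmul x y‖ ≤ ‖x‖ * ‖y‖ := by
  have hmem : tmul x y ∈ Submodule.span 𝕜 (Set.range fun p : X × Y => tmul p.1 p.2) :=
    Submodule.subset_span ⟨(x, y), rfl⟩
  rw [hT.norm_eq _ hmem]
  apply csInf_le
  · refine ⟨0, ?_⟩
    rintro c ⟨m, xs, ys, -, rfl⟩
    positivity
  · exact ⟨1, ![x], ![y], by simp, by simp⟩

lemma my_napi_zero (tmul : X →L[𝕜] Y →L[𝕜] T) : NApi tmul 0 := by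
  refine ⟨fun _ => 0, fun _ => 0, fun _ => 0, fun _ => by simp, fun _ => by simp,
    fun _ => le_refl 0, ?_, ?_⟩
  · simpa using (hasSum_zero : HasSum (fun _ : ℕ => (0 : T)) 0)
  · simpa using (hasSum_zero : HasSum (fun _ : ℕ => (0 : ℝ)) 0)

/-- A finite sum indexed by a `Finset` can be realized as a `ℕ`-indexed `HasSum`. -/
lemma my_hasSum_finset {ι : Type*} {M : Type*} [AddCommGroup M] [TopologicalSpace M]
    (s : Finset ι) (F : ι → M) :
    HasSum (fun n : ℕ => if h : n < s.card then F (s.equivFin.symm ⟨n, h⟩) else 0)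
      (∑ i ∈ s, F i) := by
  have h1 : ∀ n ∉ Finset.range s.card,
      (if h : n < s.card then F (s.equivFin.symm ⟨n, h⟩) else 0) = 0 := by
    intro n hn
    rw [dif_neg (by simpa using hn)]
  have h2 : HasSum _ _ := hasSum_sum_of_ne_finset_zero h1
  have h3 : (∑ n ∈ Finset.range s.card,
      (if h : n < s.card then F (s.equivFin.symm ⟨n, h⟩) else 0)) = ∑ i ∈ s, F i := by
    rw [← Fin.sum_univ_eq_sum_range]
    calc (∑ i : Fin s.card, (if h : (i : ℕ) < s.card then F (s.equivFin.symm ⟨i, h⟩) else 0))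
        = ∑ i : Fin s.card, F (s.equivFin.symm i) := by
          refine Finset.sum_congr rfl fun i _ => ?_
          rw [dif_pos i.isLt]
      _ = ∑ j : {a // a ∈ s}, F j := Equiv.sum_comp s.equivFin.symm (fun j => F j)
      _ = ∑ i ∈ s, F i := Finset.sum_coe_sort s F
  rw [← h3]
  exact h2

/-- A finite optimal representation gives membership in `NA_π`. -/
lemma my_napi_of_finset (tmul : X →L[𝕜] Y →L[𝕜] T) {ι : Type*} (s : Finset ι)
    (x : ι → X) (y : ι → Y) (a : ι → ℝ)
    (hx : ∀ i ∈ s, ‖x i‖ ≤ 1) (hy : ∀ i ∈ s, ‖y i‖ ≤ 1) (ha : ∀ i ∈ s, 0 ≤ a i)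
    {v : T} (hv : v = ∑ i ∈ s, (a i : 𝕜) • tmul (x i) (y i))
    (hnorm : ∑ i ∈ s, a i = ‖v‖) : NApi tmul v := by
  classical
  set e := s.equivFin.symm with he
  refine ⟨fun n => if h : n < s.card then x (e ⟨n, h⟩) else 0,
    fun n => if h : n < s.card then y (e ⟨n, h⟩) else 0,
    fun n => if h : n < s.card then a (e ⟨n, h⟩) else 0, ?_, ?_, ?_, ?_, ?_⟩
  · intro n
    by_cases h : n < s.card
    · simp only [dif_pos h]; exact hx _ (e ⟨n, h⟩).2
    · simp only [dif_neg h]; simp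
  · intro n
    by_cases h : n < s.card
    · simp only [dif_pos h]; exact hy _ (e ⟨n, h⟩).2
    · simp only [dif_neg h]; simp
  · intro n
    by_cases h : n < s.card
    · simp only [dif_pos h]; exact ha _ (e ⟨n, h⟩).2
    · simp only [dif_neg h]; exact le_rfl
  · have h := my_hasSum_finset s (fun i => (a i : 𝕜) • tmul (x i) (y i))
    rw [← hv] at h
    have hfe : (fun n : ℕ =>
        (((if h : n < s.card then a (e ⟨n, h⟩) else 0 : ℝ)) : 𝕜) •
          tmul (if h : n < s.card then x (e ⟨n, h⟩) else 0)
            (if h : n < s.card then y (e ⟨n, h⟩) else 0))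
        = (fun n : ℕ => if h : n < s.card then
            (a (s.equivFin.symm ⟨n, h⟩) : 𝕜) •
              tmul (x (s.equivFin.symm ⟨n, h⟩)) (y (s.equivFin.symm ⟨n, h⟩)) else 0) := by
      funext n
      by_cases h : n < s.card
      · simp only [dif_pos h, he]
      · simp only [dif_neg h]
        simp
    rw [hfe]
    exact h
  · have h := my_hasSum_finset s a
    rw [hnorm] at h
    have hfe : (fun n : ℕ => if h : n < s.card then a (e ⟨n, h⟩) else 0)
        = (fun n : ℕ => if h : n < s.card then a (s.equivFin.symm ⟨n, h⟩) else 0) := by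
      funext n
      by_cases h : n < s.card
      · simp only [dif_pos h, he]
      · simp only [dif_neg h]
    rw [hfe]
    exact h

lemma my_integrable_dirac {α E : Type*} [MeasurableSpace α] [MeasurableSingletonClass α]
    [NormedAddCommGroup E] (f : α → E) (p : α) : Integrable f (Measure.dirac p) := by
  constructor
  · refine (stronglyMeasurable_const (b := f p)).aestronglyMeasurable.congr ?_
    rw [Filter.EventuallyEq, ae_dirac_eq]
    exact eventually_pure.mpr rfl
  · rw [HasFiniteIntegral, lintegral_dirac]
    exact ENNReal.coe_lt_top

/-- A finite optimal representation gives membership in `INA_π`, via a discrete measure. -/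
lemma my_inapi_of_finset [MeasurableSpace X] [BorelSpace X] [MeasurableSpace Y] [BorelSpace Y]
    (tmul : X →L[𝕜] Y →L[𝕜] T) {ι : Type*} (s : Finset ι)
    (x : ι → X) (y : ι → Y) (a : ι → ℝ)
    (hx : ∀ i ∈ s, ‖x i‖ ≤ 1) (hy : ∀ i ∈ s, ‖y i‖ ≤ 1) (ha : ∀ i ∈ s, 0 ≤ a i)
    {v : T} (hv : v = ∑ i ∈ s, (a i : 𝕜) • tmul (x i) (y i))
    (hnorm : ∑ i ∈ s, a i = ‖v‖) (hc : CompleteSpace T) : INApi tmul v := by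
  classical
  haveI := hc
  set μ : Measure (X × Y) :=
    ∑ i ∈ s, ENNReal.ofReal (a i) • Measure.dirac (x i, y i) with hμdef
  have happly : ∀ A : Set (X × Y),
      μ A = ∑ i ∈ s, ENNReal.ofReal (a i) * Measure.dirac (x i, y i) A := by
    intro A
    rw [hμdef, Measure.finset_sum_apply]
    simp [Measure.smul_apply, smul_eq_mul]
  have hKmeas : MeasurableSet ((closedBall (0 : X) 1 ×ˢ closedBall (0 : Y) 1) : Set (X × Y)) :=
    (measurableSet_closedBall).prod (measurableSet_closedBall)
  have hIntEach : ∀ i ∈ s,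
      Integrable (fun p : X × Y => tmul p.1 p.2)
        (ENNReal.ofReal (a i) • Measure.dirac (x i, y i)) := by
    intro i _
    exact (my_integrable_dirac _ _).smul_measure ENNReal.ofReal_ne_top
  refine ⟨μ, ?_, ?_, ?_, ?_, ?_⟩
  · constructor
    rw [happly]
    refine ENNReal.sum_lt_top.mpr ?_
    intro i _
    exact ENNReal.mul_lt_top ENNReal.ofReal_lt_top (measure_lt_top _ _)
  · rw [happly]
    refine Finset.sum_eq_zero fun i hi => ?_
    have hmem : ((x i, y i) : X × Y) ∈ closedBall (0 : X) 1 ×ˢ closedBall (0 : Y) 1 := by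
      constructor
      · rw [mem_closedBall_zero_iff]; exact hx i hi
      · rw [mem_closedBall_zero_iff]; exact hy i hi
    rw [Measure.dirac_apply' _ hKmeas.compl]
    rw [Set.indicator_of_notMem (by simpa using hmem)]
    simp
  · rw [hμdef]
    exact integrable_finset_sum_measure.mpr hIntEach
  · rw [hμdef, integral_finset_sum_measure hIntEach, hv]
    refine Finset.sum_congr rfl fun i hi => ?_
    rw [integral_smul_measure, integral_dirac, ENNReal.toReal_ofReal (ha i hi), my_coe_smul]
  · rw [happly]
    have : ∀ i ∈ s, ENNReal.ofReal (a i) * Measure.dirac (x i, y i) Set.univ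
        = ENNReal.ofReal (a i) := by
      intro i _
      simp
    rw [Finset.sum_congr rfl this, ENNReal.toReal_sum (fun i _ => ENNReal.ofReal_ne_top),
      ← hnorm]
    exact Finset.sum_congr rfl fun i hi => ENNReal.toReal_ofReal (ha i hi)

end MyAux

section MyMain

variable (tmul : X →L[𝕜] Y →L[𝕜] T)

/-- `NA_π ⊆ closure (INA_π)`. -/
lemma my_na_subset_closure_ina [MeasurableSpace X] [BorelSpace X]
    [MeasurableSpace Y] [BorelSpace Y]
    (hT : IsProjTensor tmul) {u : T} (hu : NApi tmul u) :
    u ∈ closure {v : T | INApi tmul v} := by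
  classical
  obtain ⟨x, y, l, hx, hy, hl, hsum, hsuml⟩ := hu
  by_cases h0 : u = 0
  · subst h0
    refine subset_closure ?_
    show INApi tmul (0 : T)
    exact my_inapi_of_finset tmul (∅ : Finset ℕ) x y l (by simp) (by simp) (by simp)
      (by simp) (by simp) hT.complete
  -- the norming functional and the associated real functional G
  obtain ⟨F, hF1, hFu⟩ := exists_dual_vector 𝕜 u (norm_ne_zero_iff.mpr h0)
  set G : T →L[ℝ] ℝ := RCLike.reCLM.comp (F.restrictScalars ℝ) with hGdef
  have hGval : ∀ t : T, G t = RCLike.re (F t) := fun t => rfl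
  have hGle : ∀ t : T, G t ≤ ‖t‖ := by
    intro t
    rw [hGval]
    refine (RCLike.re_le_norm _).trans ?_
    calc ‖F t‖ ≤ ‖F‖ * ‖t‖ := F.le_opNorm t
      _ = ‖t‖ := by rw [hF1, one_mul]
  have henorm : ∀ n, ‖tmul (x n) (y n)‖ ≤ 1 := fun n =>
    (my_norm_tmul_le tmul hT (x n) (y n)).trans
      (mul_le_one₀ (hx n) (norm_nonneg _) (hy n))
  have hGu : G u = ‖u‖ := by
    rw [hGval, hFu, RCLike.ofReal_re]
  -- face property: l n * G (e n) = l n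
  have hsumG : HasSum (fun n => l n * G (tmul (x n) (y n))) ‖u‖ := by
    have h1 := hsum.mapL G
    rw [hGu] at h1
    convert h1 using 2 with n
    rw [my_coe_smul, _root_.map_smul, smul_eq_mul]
  have hface : ∀ n, l n * G (tmul (x n) (y n)) = l n := by
    have hδ : HasSum (fun n => l n - l n * G (tmul (x n) (y n))) 0 := by
      simpa using hsuml.sub hsumG
    intro n
    have hnonneg : ∀ j, 0 ≤ l j - l j * G (tmul (x j) (y j)) := by
      intro j
      have h1 : G (tmul (x j) (y j)) ≤ 1 := (hGle _).trans (henorm j)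
      nlinarith [hl j]
    have hle := le_hasSum hδ n (fun j _ => hnonneg j)
    have := hnonneg n
    linarith
  -- truncations converge to u and are INA
  have htt := hsum.tendsto_sum_nat
  refine mem_closure_of_tendsto htt ?_
  filter_upwards with N
  show INApi tmul (∑ n ∈ Finset.range N, (l n : 𝕜) • tmul (x n) (y n))
  set vN := ∑ n ∈ Finset.range N, (l n : 𝕜) • tmul (x n) (y n) with hvN
  have hnormvN : ∑ n ∈ Finset.range N, l n = ‖vN‖ := by
    refine le_antisymm ?_ ?_
    · have h1 : G vN = ∑ n ∈ Finset.range N, l n := by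
        rw [hvN, map_sum]
        refine Finset.sum_congr rfl fun n _ => ?_
        rw [my_coe_smul, _root_.map_smul, smul_eq_mul, hface n]
      rw [← h1]
      exact hGle vN
    · rw [hvN]
      refine (norm_sum_le _ _).trans ?_
      refine Finset.sum_le_sum fun n _ => ?_
      rw [norm_smul, RCLike.norm_ofReal, abs_of_nonneg (hl n)]
      exact mul_le_of_le_one_right (hl n) (henorm n)
  exact my_inapi_of_finset tmul (Finset.range N) x y l (fun n _ => hx n) (fun n _ => hy n)
    (fun n _ => hl n) rfl hnormvN hT.complete

/-- `INA_π ⊆ closure (NA_π)`. -/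
lemma my_ina_subset_closure_na [MeasurableSpace X] [BorelSpace X]
    [MeasurableSpace Y] [BorelSpace Y]
    (hT : IsProjTensor tmul) {u : T} (hu : INApi tmul u) :
    u ∈ closure {v : T | NApi tmul v} := by
  classical
  haveI := hT.complete
  obtain ⟨μ, hfin, hK, hint, hrepr, hmass⟩ := hu
  haveI := hfin
  by_cases h0 : u = 0
  · exact subset_closure (by simpa [h0] using my_napi_zero tmul)
  have hnorm_pos : 0 < ‖u‖ := norm_pos_iff.mpr h0
  obtain ⟨F, hF1, hFu⟩ := exists_dual_vector 𝕜 u (norm_ne_zero_iff.mpr h0)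
  set G : T →L[ℝ] ℝ := RCLike.reCLM.comp (F.restrictScalars ℝ) with hGdef
  have hGval : ∀ t : T, G t = RCLike.re (F t) := fun t => rfl
  have hGle : ∀ t : T, G t ≤ ‖t‖ := by
    intro t
    rw [hGval]
    refine (RCLike.re_le_norm _).trans ?_
    calc ‖F t‖ ≤ ‖F‖ * ‖t‖ := F.le_opNorm t
      _ = ‖t‖ := by rw [hF1, one_mul]
  have hGu : G u = ‖u‖ := by rw [hGval, hFu, RCLike.ofReal_re]
  set φ : X × Y → T := fun p => tmul p.1 p.2 with hφdef
  have hKae : ∀ᵐ p ∂μ, p ∈ closedBall (0 : X) 1 ×ˢ closedBall (0 : Y) 1 :=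
    mem_ae_iff.mpr hK
  have hφ1 : ∀ᵐ p ∂μ, ‖φ p‖ ≤ 1 := by
    filter_upwards [hKae] with p hp
    refine (my_norm_tmul_le tmul hT p.1 p.2).trans (mul_le_one₀ ?_ (norm_nonneg _) ?_)
    · exact mem_closedBall_zero_iff.mp hp.1
    · exact mem_closedBall_zero_iff.mp hp.2
  have hGφint : Integrable (fun p => G (φ p)) μ := G.integrable_comp hint
  have hGint : ∫ p, G (φ p) ∂μ = ‖u‖ := by
    rw [G.integral_comp_comm hint, ← hrepr, hGu]
  have hface : ∀ᵐ p ∂μ, G (φ p) = 1 := by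
    have hle1 : ∀ᵐ p ∂μ, G (φ p) ≤ 1 := by
      filter_upwards [hφ1] with p hp
      exact (hGle _).trans hp
    have hi : Integrable (fun p => 1 - G (φ p)) μ := (integrable_const 1).sub hGφint
    have h0' : ∫ p, (1 - G (φ p)) ∂μ = 0 := by
      rw [integral_sub (integrable_const 1) hGφint, integral_const, hGint, measureReal_def, hmass]
      simp
    have hz := (integral_eq_zero_iff_of_nonneg_ae
      (by filter_upwards [hle1] with p hp; simp; linarith) hi).mp h0'
    filter_upwards [hz] with p hp
    have : (1 : ℝ) - G (φ p) = 0 := hp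
    linarith
  -- strongly measurable representative
  have hφaesm := hint.aestronglyMeasurable
  set g : X × Y → T := hφaesm.mk φ with hgdef
  have hgm : StronglyMeasurable g := hφaesm.stronglyMeasurable_mk
  have hfg : φ =ᵐ[μ] g := hφaesm.ae_eq_mk
  letI : MeasurableSpace T := borel T
  haveI : BorelSpace T := ⟨rfl⟩
  have hgmeas : Measurable g := hgm.measurable
  set GOOD : Set T :=
    {t | (∃ p : X × Y, ‖p.1‖ ≤ 1 ∧ ‖p.2‖ ≤ 1 ∧ tmul p.1 p.2 = t) ∧ G t = 1} with hGOODdef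
  have hnormGOOD : ∀ t ∈ GOOD, ‖t‖ ≤ 1 := by
    rintro t ⟨⟨q, hq1, hq2, hqe⟩, -⟩
    rw [← hqe]
    exact (my_norm_tmul_le tmul hT q.1 q.2).trans (mul_le_one₀ hq1 (norm_nonneg _) hq2)
  have hae_good : ∀ᵐ p ∂μ, g p ∈ GOOD := by
    filter_upwards [hfg, hKae, hface] with p h1 h2 h3
    refine ⟨⟨p, mem_closedBall_zero_iff.mp h2.1, mem_closedBall_zero_iff.mp h2.2, h1⟩, ?_⟩
    rw [← h1]
    exact h3
  set s : Set T := Set.range g ∩ GOOD with hsdef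
  have hsep : IsSeparable s := hgm.isSeparable_range.mono inter_subset_left
  haveI : SeparableSpace s := hsep.separableSpace
  have hae_s : ∀ᵐ p ∂μ, g p ∈ s := by
    filter_upwards [hae_good] with p hp
    exact ⟨mem_range_self p, hp⟩
  have hμ0 : μ ≠ 0 := by
    intro h
    rw [h] at hmass
    simp at hmass
    exact absurd hmass.symm (ne_of_gt hnorm_pos)
  haveI : (ae μ).NeBot := ae_neBot.mpr hμ0
  obtain ⟨p₀, hp₀⟩ := hae_s.exists
  have hgint : Integrable g μ := hint.congr hfg
  have hfi : HasFiniteIntegral (fun p => g p - g p₀) μ := (hgint.sub (integrable_const _)).2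
  have htend := SimpleFunc.tendsto_approxOn_L1_enorm hgmeas hp₀
    (hae_s.mono fun p h => subset_closure h) hfi
  rw [Metric.mem_closure_iff]
  intro ε hε
  have hε' : (0 : ENNReal) < ENNReal.ofReal ε := ENNReal.ofReal_pos.mpr hε
  obtain ⟨n, hn⟩ := (htend.eventually_lt_const hε').exists
  set ψ := SimpleFunc.approxOn g hgmeas s (g p₀) hp₀ n with hψdef
  have hψmem : ∀ p, ψ p ∈ s := fun p => SimpleFunc.approxOn_mem hgmeas hp₀ n p
  have hψnorm : ∀ p, ‖ψ p‖ ≤ 1 := fun p => hnormGOOD _ (hψmem p).2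
  have hψint : Integrable ψ μ :=
    Integrable.mono' (integrable_const 1) ψ.stronglyMeasurable.aestronglyMeasurable
      (Eventually.of_forall fun p => hψnorm p)
  set v := ∫ p, ψ p ∂μ with hvdef
  have hv_eq : v = ∑ t ∈ ψ.range, (μ (ψ ⁻¹' {t})).toReal • t := by
    rw [hvdef, ← SimpleFunc.integral_eq_integral ψ hψint, SimpleFunc.integral_eq]
    rfl
  have hrange_good : ∀ t ∈ ψ.range, t ∈ GOOD := by
    intro t ht
    obtain ⟨p, hp⟩ := SimpleFunc.mem_range.mp ht
    exact hp ▸ (hψmem p).2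
  -- choice of elementary factors
  let xF : T → X := fun t =>
    if h : ∃ p : X × Y, ‖p.1‖ ≤ 1 ∧ ‖p.2‖ ≤ 1 ∧ tmul p.1 p.2 = t then h.choose.1 else 0
  let yF : T → Y := fun t =>
    if h : ∃ p : X × Y, ‖p.1‖ ≤ 1 ∧ ‖p.2‖ ≤ 1 ∧ tmul p.1 p.2 = t then h.choose.2 else 0
  have hxyF : ∀ t ∈ GOOD, ‖xF t‖ ≤ 1 ∧ ‖yF t‖ ≤ 1 ∧ tmul (xF t) (yF t) = t := by
    rintro t ⟨hex, -⟩
    refine ⟨?_, ?_, ?_⟩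
    · simp only [xF, dif_pos hex]; exact hex.choose_spec.1
    · simp only [yF, dif_pos hex]; exact hex.choose_spec.2.1
    · simp only [xF, yF, dif_pos hex]; exact hex.choose_spec.2.2
  set a : T → ℝ := fun t => (μ (ψ ⁻¹' {t})).toReal with hadef
  have ha_nonneg : ∀ t, 0 ≤ a t := fun t => ENNReal.toReal_nonneg
  have hv_rep : v = ∑ t ∈ ψ.range, (a t : 𝕜) • tmul (xF t) (yF t) := by
    rw [hv_eq]
    refine Finset.sum_congr rfl fun t ht => ?_
    rw [(hxyF t (hrange_good t ht)).2.2, my_coe_smul]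
  have hv_norm : ∑ t ∈ ψ.range, a t = ‖v‖ := by
    refine le_antisymm ?_ ?_
    · have h1 : G v = ∑ t ∈ ψ.range, a t := by
        rw [hv_eq, map_sum]
        refine Finset.sum_congr rfl fun t ht => ?_
        rw [_root_.map_smul, smul_eq_mul, (hrange_good t ht).2, mul_one]
      rw [← h1]
      exact hGle v
    · rw [hv_eq]
      refine (norm_sum_le _ _).trans ?_
      refine Finset.sum_le_sum fun t ht => ?_
      rw [norm_smul, Real.norm_eq_abs, abs_of_nonneg (ha_nonneg t)]
      exact mul_le_of_le_one_right (ha_nonneg t) (hnormGOOD t (hrange_good t ht))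
  refine ⟨v, ?_, ?_⟩
  · show NApi tmul v
    exact my_napi_of_finset tmul ψ.range xF yF a
      (fun t ht => (hxyF t (hrange_good t ht)).1)
      (fun t ht => (hxyF t (hrange_good t ht)).2.1)
      (fun t _ => ha_nonneg t) hv_rep hv_norm
  · -- distance estimate
    rw [dist_eq_norm]
    have h1 : u - v = ∫ p, (φ p - ψ p) ∂μ := by
      rw [integral_sub hint hψint, ← hrepr]
    have h2 : ‖u - v‖ ≤ (∫⁻ p, (‖φ p - ψ p‖₊ : ENNReal) ∂μ).toReal := by
      rw [h1]
      have := norm_integral_le_lintegral_norm (μ := μ) (fun p => φ p - ψ p)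
      simpa [enorm_eq_nnnorm] using this
    have h3 : (∫⁻ p, (‖φ p - ψ p‖₊ : ENNReal) ∂μ) = ∫⁻ p, (‖ψ p - g p‖₊ : ENNReal) ∂μ := by
      refine lintegral_congr_ae ?_
      filter_upwards [hfg] with p hp
      rw [hp, ← neg_sub (ψ p) (g p), nnnorm_neg]
    refine lt_of_le_of_lt h2 ?_
    rw [h3]
    exact ENNReal.toReal_lt_of_lt_ofReal hn

end MyMain

/-- Corollary 2.11: density of `NA_π` is equivalent to density of `INA_π`. -/
theorem stmt_7 [CompleteSpace X] [CompleteSpace Y]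
    [MeasurableSpace X] [BorelSpace X] [MeasurableSpace Y] [BorelSpace Y]
    (tmul : X →L[𝕜] Y →L[𝕜] T) (hT : IsProjTensor tmul) :
    Dense {u : T | NApi tmul u} ↔ Dense {u : T | INApi tmul u} := by
  constructor
  · intro h
    rw [← dense_closure]
    exact h.mono fun u hu => my_na_subset_closure_ina tmul hT hu
  · intro h
    rw [← dense_closure]
    exact h.mono fun u hu => my_ina_subset_closure_na tmul hT hu
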